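/- In the setting of the Sperner–Meshulam lemma, there exists for every subset I ⊆ [k] a simplicial (|I|-1)-chain c^I over Z/2 supported on K^I with c^∅ = 1, satisfying ∂c^I = Σ_{i∈I} c^{I\{i}} for all non-empty I (where for |I| = 1 the boundary map is the augmentation). That is, a compatible system of chains certifying the connectivity hypotheses exists. -/

import Mathlib

/-- An (abstract) simplicial complex on vertex set `V`, given as its set of faces:
downward closed and containing the empty face. -/
def IsComplex {V : Type*} (K : Set (Finset V)) : Prop :=
  ∅ ∈ K ∧ ∀ s ∈ K, ∀ t ⊆ s, t ∈ K

/-- The simplicial boundary operator over `ℤ/2`, on the augmented chain complex: a chain is a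
finitely supported function on faces (a face of cardinality `d` has degree `d - 1`; the empty
face spans the degree `-1` part, so that `bd` in degree `0` is the augmentation map). -/
noncomputable def bd {V : Type*} [DecidableEq V] (c : Finset V →₀ ZMod 2) :
    Finset V →₀ ZMod 2 :=
  c.sum fun s a => a • ∑ v ∈ s, Finsupp.single (s.erase v) (1 : ZMod 2)

/-- `c` is a chain of the complex `K` supported on faces of cardinality `d`
(i.e. a simplicial `(d-1)`-chain of `K` over `ℤ/2`). -/
def IsChainOn {V : Type*} (K : Set (Finset V)) (d : ℕ) (c : Finset V →₀ ZMod 2) : Prop :=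
  ∀ s ∈ c.support, s ∈ K ∧ s.card = d

/-- `K` is homologically `m`-connected over `ℤ/2`: its reduced homology vanishes in all
degrees `≤ m` (degree `d - 1` corresponds to faces of cardinality `d`); `(-1)`-connected
means non-empty, and `m ≤ -2` demands nothing. -/
def HomConnected {V : Type*} [DecidableEq V] (K : Set (Finset V)) (m : ℤ) : Prop :=
  ∀ d : ℕ, (d : ℤ) ≤ m + 1 → ∀ c, IsChainOn K d c → bd c = 0 →
    ∃ b, IsChainOn K (d + 1) b ∧ bd b = c

lemma bd_add {V : Type*} [DecidableEq V] (x y : Finset V →₀ ZMod 2) :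
    bd (x + y) = bd x + bd y := by
  unfold bd
  apply Finsupp.sum_add_index' <;> intros <;> simp [add_smul]

noncomputable def bdHom {V : Type*} [DecidableEq V] :
    (Finset V →₀ ZMod 2) →+ (Finset V →₀ ZMod 2) :=
  AddMonoidHom.mk' bd bd_add

lemma bd_sum {V : Type*} [DecidableEq V] {ι : Type*} (s : Finset ι)
    (f : ι → Finset V →₀ ZMod 2) : bd (∑ i ∈ s, f i) = ∑ i ∈ s, bd (f i) :=
  map_sum bdHom f s

lemma bd_single_empty {V : Type*} [DecidableEq V] :
    bd (Finsupp.single (∅ : Finset V) (1 : ZMod 2)) = 0 := by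
  simp [bd, Finsupp.sum_single_index]

lemma add_self_zero {V : Type*} (x : Finset V →₀ ZMod 2) : x + x = 0 := by
  ext a
  have : ∀ b : ZMod 2, b + b = 0 := by decide
  simp [this]

/-- In the setting of the Sperner–Meshulam lemma there is a compatible system
of chains: `(|I|-1)`-chains `c^I` over `ℤ/2` supported on `K^I`, with `c^∅ = 1` (the generator
in degree `-1`) and `∂c^I = Σ_{i ∈ I} c^{I∖{i}}` for every non-empty `I` (the boundary in
degree `0` being the augmentation). -/
theorem sperner_meshulam_chains {V : Type*} [DecidableEq V] (k : ℕ) (hk : 0 < k)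
    (K : Finset (Fin k) → Set (Finset V))
    (hcx : ∀ I, IsComplex (K I))
    (hmono : ∀ I J : Finset (Fin k), I ⊆ J → K I ⊆ K J)
    (hconn : ∀ I : Finset (Fin k), HomConnected (K I) ((I.card : ℤ) - 2)) :
    ∃ c : Finset (Fin k) → (Finset V →₀ ZMod 2),
      c ∅ = Finsupp.single ∅ 1 ∧
      (∀ I, IsChainOn (K I) I.card (c I)) ∧
      (∀ I : Finset (Fin k), I.Nonempty → bd (c I) = ∑ i ∈ I, c (I.erase i)) := by
  suffices h : ∀ n : ℕ, ∃ c : Finset (Fin k) → (Finset V →₀ ZMod 2),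
      c ∅ = Finsupp.single ∅ 1 ∧
      (∀ I, I.card ≤ n → IsChainOn (K I) I.card (c I)) ∧
      (∀ I : Finset (Fin k), I.Nonempty → I.card ≤ n →
        bd (c I) = ∑ i ∈ I, c (I.erase i)) by
    obtain ⟨c, h1, h2, h3⟩ := h k
    have hcard : ∀ I : Finset (Fin k), I.card ≤ k := fun I =>
      le_trans I.card_le_univ (le_of_eq (Finset.card_fin k))
    exact ⟨c, h1, fun I => h2 I (hcard I), fun I hI => h3 I hI (hcard I)⟩
  intro n
  induction n with
  | zero =>
    refine ⟨fun _ => Finsupp.single ∅ 1, rfl, ?_, ?_⟩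
    · intro I hI
      have : I = ∅ := Finset.card_eq_zero.mp (Nat.le_zero.mp hI)
      subst this
      intro s hs
      have : s = ∅ := by
        have := Finsupp.support_single_subset hs
        simpa using this
      subst this
      exact ⟨(hcx ∅).1, Finset.card_empty⟩
    · intro I hI hI0
      exact absurd (Nat.le_zero.mp hI0) (Finset.card_ne_zero_of_mem hI.choose_spec)
  | succ n ih =>
    obtain ⟨c, hc0, hchain, hbd⟩ := ih
    have key : ∀ I : Finset (Fin k), I.card = n + 1 →
        ∃ b, IsChainOn (K I) (n + 1) b ∧ bd b = ∑ i ∈ I, c (I.erase i) := by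
      intro I hI
      have herase_card : ∀ i ∈ I, (I.erase i).card = n := by
        intro i hi
        rw [Finset.card_erase_of_mem hi, hI]
        rfl
      have hz1 : IsChainOn (K I) n (∑ i ∈ I, c (I.erase i)) := by
        intro s hs
        have hs' := Finsupp.support_finset_sum hs
        obtain ⟨i, hi, hsi⟩ := Finset.mem_biUnion.mp hs'
        obtain ⟨hsK, hsc⟩ := hchain (I.erase i) (le_of_eq (herase_card i hi)) s hsi
        rw [herase_card i hi] at hsc
        exact ⟨hmono _ _ (Finset.erase_subset i I) hsK, hsc⟩
      have hz2 : bd (∑ i ∈ I, c (I.erase i)) = 0 := by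
        rw [bd_sum]
        rcases Nat.eq_zero_or_pos n with hn | hn
        · subst hn
          obtain ⟨i, hi⟩ := Finset.card_eq_one.mp hI
          subst hi
          rw [Finset.sum_singleton, Finset.erase_singleton, hc0, bd_single_empty]
        · have : ∀ i ∈ I, bd (c (I.erase i)) =
              ∑ j ∈ I.erase i, c ((I.erase i).erase j) := by
            intro i hi
            exact hbd (I.erase i)
              (Finset.card_pos.mp (by rw [herase_card i hi]; exact hn))
              (le_of_eq (herase_card i hi))
          rw [Finset.sum_congr rfl this,
            Finset.sum_sigma' I (fun i => I.erase i)
              (fun i j => c ((I.erase i).erase j))]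
          refine Finset.sum_involution (fun a _ => ⟨a.2, a.1⟩) ?_ ?_ ?_ ?_
          · intro a ha
            rw [Finset.erase_right_comm]
            exact add_self_zero _
          · intro a ha _
            have ha' := Finset.mem_sigma.mp ha
            have hne : a.2 ≠ a.1 := Finset.ne_of_mem_erase ha'.2
            intro hcontra
            exact hne (congrArg Sigma.fst hcontra)
          · intro a ha
            have ha' := Finset.mem_sigma.mp ha
            exact Finset.mem_sigma.mpr
              ⟨Finset.mem_of_mem_erase ha'.2,
               Finset.mem_erase.mpr ⟨(Finset.ne_of_mem_erase ha'.2).symm.symm.symm, ha'.1⟩⟩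
          · intro a ha
            rfl
      have hd : (n : ℤ) ≤ ((I.card : ℤ) - 2) + 1 := by
        rw [hI]; push_cast; omega
      exact hconn I n hd _ hz1 hz2
    choose b hb1 hb2 using key
    refine ⟨fun I => if h : I.card = n + 1 then b I h else c I, ?_, ?_, ?_⟩
    · simp only [Finset.card_empty]
      refine (dif_neg (show ¬ (0 = n + 1) by omega)).trans ?_
      exact hc0
    · intro I hI
      by_cases h : I.card = n + 1
      · beta_reduce
        rw [dif_pos h, h]
        exact hb1 I h
      · beta_reduce
        rw [dif_neg h]
        exact hchain I (by omega)
    · intro I hI hIcard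
      have herase : ∀ i ∈ I, (if h : (I.erase i).card = n + 1 then b (I.erase i) h
          else c (I.erase i)) = c (I.erase i) := by
        intro i hi
        rw [dif_neg]
        rw [Finset.card_erase_of_mem hi]
        omega
      rw [Finset.sum_congr rfl herase]
      by_cases h : I.card = n + 1
      · beta_reduce
        rw [dif_pos h]
        exact hb2 I h
      · beta_reduce
        rw [dif_neg h]
        exact hbd I hI (by omega)
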